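/- Let S be a left cancellative monoid. Let X = X^0 ∖ (X^1 ∪ ⋯ ∪ X^{m_0}) and, for i = 1,…,m (m ≥ 1), X_i = X_i^0 ∖ (X_i^1 ∪ ⋯ ∪ X_i^{m_i}), where all the sets X^j and X_i^j belong to J(S), and assume X_i ⊆ X for all i. For a character η, say η(X) = 1 if η(X^0) = 1 and η(X^j) = 0 for 1 ≤ j ≤ m_0, and define η(X_i) = 1 analogously via the given representation of X_i. Then the set U = {η ∈ Ω(S) : η(X) = 1 and η(X_i) = 0 for i = 1,…,m} is disjoint from ∂Ω(S) if and only if {X_1, …, X_m} is a foundation set for X, i.e. every nonempty Y ∈ J(S) with Y ⊆ X intersects some X_i. -/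

import Mathlib

open scoped Classical

namespace SgC

variable {M : Type*}

/-- Composition of partial maps (`g` after `f`). -/
def pcomp (g f : M → Option M) : M → Option M := fun s => (f s).bind g

/-- The canonical partial inverse of a partial map (the genuine inverse when the map
is injective on its domain, as is the case for all maps in the left inverse hull of a
left cancellative monoid). -/
noncomputable def pinv (f : M → Option M) : M → Option M :=
  fun t => if h : ∃ s, f s = some t then some h.choose else none

/-- Left translation `t ↦ s * t` as an everywhere-defined partial map. -/
def ptransl [Mul M] (s : M) : M → Option M := fun t => some (s * t)

/-- The identity partial map. -/
def pid : M → Option M := fun s => some s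

/-- The block `q⁻¹ ∘ p`: first multiply on the left by `p`, then remove `q` on the left. -/
noncomputable def pblock [Mul M] (p : M × M) : M → Option M :=
  pcomp (pinv (ptransl p.2)) (ptransl p.1)

/-- Membership in the left inverse hull `I_ℓ(M)`: `h` is of the form
`s₂ₙ⁻¹ s₂ₙ₋₁ ⋯ s₂⁻¹ s₁` for some `n ≥ 1` and `sᵢ ∈ M` (the list records the pairs
`(s₁,s₂), (s₃,s₄), …`, applied left to right). -/
def InInvHull [Mul M] (h : M → Option M) : Prop :=
  ∃ l : List (M × M), l ≠ [] ∧
    h = l.foldl (fun acc p => pcomp (pblock p) acc) pid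

/-- Membership in the inverse hull generated by translations by elements of `σ` only
(used for canonical copies of `I_ℓ(S)` inside partial maps of a larger monoid). -/
def InInvHullOn [Mul M] (σ : Set M) (h : M → Option M) : Prop :=
  ∃ l : List (M × M), l ≠ [] ∧ (∀ p ∈ l, p.1 ∈ σ ∧ p.2 ∈ σ) ∧
    h = l.foldl (fun acc p => pcomp (pblock p) acc) pid

/-- Domain of a partial map. -/
def pdom (h : M → Option M) : Set M := {s | h s ≠ none}

/-- `h` fixes the set `Y` pointwise (in particular `Y ⊆ dom h`). -/
def PFixes (h : M → Option M) (Y : Set M) : Prop := ∀ s ∈ Y, h s = some s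

/-- Preimage of a set under a partial map. -/
def ppre (h : M → Option M) (X : Set M) : Set M := {s | ∃ x ∈ X, h s = some x}

/-- Constructible right ideals: domains of elements of the left inverse hull. -/
def IsConstructible [Mul M] (X : Set M) : Prop := ∃ h, InInvHull h ∧ X = pdom h

/-- Membership in `J̄(S)`: sets of the form `X₀` or `X₀ ∖ (X₁ ∪ ⋯ ∪ Xₘ)` with all
`Xᵢ` constructible. -/
def IsConstructibleBar [Mul M] (X : Set M) : Prop :=
  ∃ (X₀ : Set M) (m : ℕ) (Xi : Fin m → Set M),
    IsConstructible X₀ ∧ (∀ i, IsConstructible (Xi i)) ∧ X = X₀ \ ⋃ i, Xi i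

/-- `Xi` is a foundation family for `X`: each `Xi i ⊆ X` and every nonempty
constructible right ideal contained in `X` intersects some `Xi i`. -/
def IsFoundation [Mul M] (X : Set M) {ι : Type*} (Xi : ι → Set M) : Prop :=
  (∀ i, Xi i ⊆ X) ∧
  ∀ Y : Set M, IsConstructible Y → Y.Nonempty → Y ⊆ X → ∃ i, (Y ∩ Xi i).Nonempty

/-- Strong C*-regularity. -/
def StronglyRegular (M : Type*) [Monoid M] : Prop :=
  ∀ (n : ℕ) (h : Fin n → M → Option M), (∀ k, InInvHull (h k)) →
  ∀ (m : ℕ) (X : Set M) (Xi : Fin m → Set M),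
    IsConstructible X → (∀ i, IsConstructible (Xi i)) →
    (X \ ⋃ i, Xi i).Nonempty →
    (X \ ⋃ i, Xi i) ⊆ ⋃ k, {s | h k s = some s} →
    ∃ (l : ℕ) (Y : Fin l → Set M) (kk : Fin l → Fin n),
      (∀ j, IsConstructible (Y j)) ∧
      (X \ ⋃ i, Xi i) ⊆ ⋃ j, Y j ∧
      ∀ j, PFixes (h (kk j)) (Y j)

/-- C*-regularity. -/
def Regular (M : Type*) [Monoid M] : Prop :=
  ∀ (n : ℕ) (h : Fin n → M → Option M), (∀ k, InInvHull (h k)) →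
  ∀ X : Set M, IsConstructibleBar X → X.Nonempty →
    X ⊆ ⋃ k, {s | h k s = some s} →
    ∃ (l : ℕ) (Y : Fin l → Set M) (kk : Fin l → Fin n),
      (∀ j, IsConstructibleBar (Y j)) ∧ X ⊆ ⋃ j, Y j ∧
      ∀ j, PFixes (h (kk j)) (Y j)

/-- Strong C*-regularity on the boundary. -/
def StronglyRegularOnBoundary (M : Type*) [Monoid M] : Prop :=
  ∀ (n : ℕ) (h : Fin n → M → Option M), (∀ k, InInvHull (h k)) →
  ∀ (m : ℕ) (X : Set M) (Xi : Fin m → Set M),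
    IsConstructible X → (∀ i, IsConstructible (Xi i)) → (∀ i, Xi i ⊆ X) →
    (X \ ⋃ i, Xi i).Nonempty →
    (X \ ⋃ i, Xi i) ⊆ ⋃ k, {s | h k s = some s} →
    ∃ (l : ℕ) (Y : Fin l → Set M) (kk : Fin l → Fin n),
      (∀ j, IsConstructible (Y j)) ∧ (∀ j, PFixes (h (kk j)) (Y j)) ∧
      IsFoundation X (Sum.elim Xi Y)

/-- C*-regularity on the boundary. -/
def RegularOnBoundary (M : Type*) [Monoid M] : Prop :=
  ∀ (n : ℕ) (h : Fin n → M → Option M), (∀ k, InInvHull (h k)) →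
  ∀ (m : ℕ) (X : Set M) (Xi : Fin m → Set M),
    IsConstructible X → (∀ i, IsConstructible (Xi i)) → (∀ i, Xi i ⊆ X) →
    (X \ ⋃ i, Xi i).Nonempty →
    (X \ ⋃ i, Xi i) ⊆ ⋃ k, {s | h k s = some s} →
    ∃ (l : ℕ) (Y : Fin l → Set M) (kk : Fin l → Fin n),
      (∀ j, IsConstructibleBar (Y j)) ∧ (∀ j, PFixes (h (kk j)) (Y j)) ∧
      IsFoundation X (Sum.elim Xi Y)

/-- The type of constructible right ideals `J(M)`. -/
def CIdeal (M : Type*) [Mul M] : Type _ := {X : Set M // IsConstructible X}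

/-- The character space `{0,1}^{J(M)}` with the topology of pointwise convergence. -/
abbrev CharSpace (M : Type*) [Mul M] : Type _ := CIdeal M → Bool

/-- The principal character `χ_s`. -/
noncomputable def princhar [Mul M] (s : M) : CharSpace M :=
  fun X => decide (s ∈ X.1)

/-- `Ω(M)`: the closure of the set of principal characters. -/
noncomputable def Omega (M : Type*) [Mul M] : Set (CharSpace M) :=
  closure (Set.range (princhar : M → CharSpace M))

/-- Filters on `J(M)`: nonempty collections of nonempty constructible ideals closed
under intersections and enlargements within `J(M)`. -/
def IsFilterOn [Mul M] (F : Set (CIdeal M)) : Prop :=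
  F.Nonempty ∧ (∀ X ∈ F, (X.1 : Set M).Nonempty) ∧
  (∀ X ∈ F, ∀ Y ∈ F, ∀ Z : CIdeal M, Z.1 = X.1 ∩ Y.1 → Z ∈ F) ∧
  (∀ X ∈ F, ∀ Y : CIdeal M, X.1 ⊆ Y.1 → Y ∈ F)

/-- Nonzero multiplicative `{0,1}`-valued maps on `J(M)`. -/
def IsChar [Mul M] (χ : CharSpace M) : Prop :=
  (∃ X, χ X = true) ∧
  ∀ X Y Z : CIdeal M, Z.1 = X.1 ∩ Y.1 → χ Z = (χ X && χ Y)

/-- Maximal characters: characters whose associated filter is maximal among filters. -/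
def IsMaximalChar [Mul M] (χ : CharSpace M) : Prop :=
  IsChar χ ∧ IsFilterOn {X | χ X = true} ∧
  ∀ G : Set (CIdeal M), IsFilterOn G → {X | χ X = true} ⊆ G → G = {X | χ X = true}

/-- The set of maximal characters `Ω_max(M)`. -/
def OmegaMax (M : Type*) [Mul M] : Set (CharSpace M) := {χ | IsMaximalChar χ}

/-- The boundary `∂Ω(M)`: the closure of the set of maximal characters. -/
noncomputable def BoundaryOmega (M : Type*) [Mul M] : Set (CharSpace M) :=
  closure (OmegaMax M)



/-! ### Auxiliary development -/

/-! ### Part A : partial maps -/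

def PInj (f : M → Option M) : Prop :=
  ∀ ⦃s t u : M⦄, f s = some u → f t = some u → s = t

lemma option_ext' {a b : Option M} (h : ∀ s : M, a = some s ↔ b = some s) : a = b := by
  cases a with
  | none => cases b with
    | none => rfl
    | some t => exact absurd ((h t).mpr rfl) (by simp)
  | some s => exact ((h s).mp rfl).symm

lemma pcomp_assoc (f g h : M → Option M) : pcomp h (pcomp g f) = pcomp (pcomp h g) f := by
  funext s; simp [pcomp, Option.bind_assoc]; rfl

@[simp] lemma pcomp_pid (f : M → Option M) : pcomp f pid = f := by
  funext s; simp [pcomp, pid]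

@[simp] lemma pid_pcomp (f : M → Option M) : pcomp pid f = f := by
  funext s; simp [pcomp, pid]; cases f s <;> rfl

lemma pcomp_eq_some {g f : M → Option M} {s t : M} :
    pcomp g f s = some t ↔ ∃ u, f s = some u ∧ g u = some t := by
  simp [pcomp, Option.bind_eq_some_iff]

lemma pinv_eq_some {f : M → Option M} (hf : PInj f) {s t : M} :
    pinv f t = some s ↔ f s = some t := by
  constructor
  · intro h
    unfold pinv at h
    split at h
    · next he =>
      have := he.choose_spec
      simp only [Option.some_inj] at h
      exact h ▸ this
    · simp at h
  · intro h
    have he : ∃ s, f s = some t := ⟨s, h⟩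
    have : he.choose = s := hf he.choose_spec h
    simp [pinv, he, this]

lemma pinj_pinv {f : M → Option M} : PInj (pinv f) := by
  intro s t u hs ht
  unfold pinv at hs ht
  split at hs
  · next he =>
    split at ht
    · next he' =>
      simp only [Option.some_inj] at hs ht
      have h1 := he.choose_spec
      have h2 := he'.choose_spec
      rw [hs] at h1
      rw [ht] at h2
      rw [h1] at h2
      exact (Option.some_inj.mp h2)
    · simp at ht
  · simp at hs

lemma pinj_pcomp {f g : M → Option M} (hf : PInj f) (hg : PInj g) : PInj (pcomp g f) := by
  intro s t u hs ht
  rw [pcomp_eq_some] at hs ht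
  obtain ⟨a, ha, ha'⟩ := hs
  obtain ⟨b, hb, hb'⟩ := ht
  have : a = b := hg ha' hb'
  exact hf ha (this ▸ hb)

lemma pinj_pid : PInj (pid : M → Option M) := by
  intro s t u hs ht; simp [pid] at hs ht; rw [hs, ht]

/-! ### hull algebra -/

lemma pinj_ptransl [Mul M] [IsLeftCancelMul M] (a : M) : PInj (ptransl a : M → Option M) := by
  intro s t u hs ht
  simp only [ptransl, Option.some_inj] at hs ht
  exact mul_left_cancel (hs.trans ht.symm)

lemma pinj_pblock [Mul M] [IsLeftCancelMul M] (p : M × M) : PInj (pblock p : M → Option M) :=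
  pinj_pcomp (pinj_ptransl p.1) pinj_pinv

lemma pinv_pcomp {f g : M → Option M} (hf : PInj f) (hg : PInj g) :
    pinv (pcomp g f) = pcomp (pinv f) (pinv g) := by
  funext t
  apply option_ext'
  intro s
  rw [pinv_eq_some (pinj_pcomp hf hg), pcomp_eq_some, pcomp_eq_some]
  constructor
  · rintro ⟨u, hu, hu'⟩
    exact ⟨u, (pinv_eq_some hg).mpr hu', (pinv_eq_some hf).mpr hu⟩
  · rintro ⟨u, hu, hu'⟩
    exact ⟨u, (pinv_eq_some hf).mp hu', (pinv_eq_some hg).mp hu⟩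


lemma pinv_pinv {f : M → Option M} (hf : PInj f) : pinv (pinv f) = f := by
  funext t
  apply option_ext'
  intro s
  rw [pinv_eq_some (pinj_pinv), pinv_eq_some hf]

lemma pinv_pid : pinv (pid : M → Option M) = pid := by
  funext t
  apply option_ext'
  intro s
  rw [pinv_eq_some pinj_pid]
  simp [pid, eq_comm]

lemma pinv_pblock [Mul M] [IsLeftCancelMul M] (p : M × M) :
    pinv (pblock p : M → Option M) = pblock (p.2, p.1) := by
  unfold pblock
  rw [pinv_pcomp (pinj_ptransl p.1) pinj_pinv, pinv_pinv (pinj_ptransl p.2)]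

/-- key foldl lemma -/
lemma foldl_pcomp (l : List (M × M)) [Mul M] (b : M → Option M) :
    l.foldl (fun acc p => pcomp (pblock p) acc) b
      = pcomp (l.foldl (fun acc p => pcomp (pblock p) acc) pid) b := by
  induction l generalizing b with
  | nil => simp
  | cons p l ih =>
    simp only [List.foldl_cons]
    rw [ih (pcomp (pblock p) b), ih (pcomp (pblock p) pid), pcomp_pid, pcomp_assoc]

lemma hull_pcomp [Mul M] {h g : M → Option M} (hh : InInvHull h) (hg : InInvHull g) :
    InInvHull (pcomp g h) := by
  obtain ⟨l, hl, rfl⟩ := hh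
  obtain ⟨l', hl', rfl⟩ := hg
  refine ⟨l ++ l', by simp [hl], ?_⟩
  conv_rhs => rw [List.foldl_append, foldl_pcomp]

lemma hull_pinj [Mul M] [IsLeftCancelMul M] {h : M → Option M} (hh : InInvHull h) : PInj h := by
  obtain ⟨l, -, rfl⟩ := hh
  induction l using List.reverseRecOn with
  | nil => exact pinj_pid
  | append_singleton l p ih =>
    rw [List.foldl_append]
    simp only [List.foldl_cons, List.foldl_nil]
    exact pinj_pcomp ih (pinj_pblock p)

lemma foldl_pinj [Mul M] [IsLeftCancelMul M] (l : List (M × M)) :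
    PInj (l.foldl (fun acc p => pcomp (pblock p) acc) pid) := by
  induction l using List.reverseRecOn with
  | nil => exact pinj_pid
  | append_singleton l p ih =>
    rw [List.foldl_append]
    simp only [List.foldl_cons, List.foldl_nil]
    exact pinj_pcomp ih (pinj_pblock p)

lemma pinv_foldl [Mul M] [IsLeftCancelMul M] (l : List (M × M)) :
    pinv (l.foldl (fun acc p => pcomp (pblock p) acc) pid)
      = (l.reverse.map Prod.swap).foldl (fun acc p => pcomp (pblock p) acc) pid := by
  induction l using List.reverseRecOn with
  | nil => simp [pinv_pid]
  | append_singleton l p ih =>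
    rw [List.foldl_append]
    simp only [List.foldl_cons, List.foldl_nil]
    rw [pinv_pcomp (foldl_pinj l) (pinj_pblock p), ih, pinv_pblock]
    rw [List.reverse_append, List.reverse_singleton, List.singleton_append, List.map_cons,
      List.foldl_cons, pcomp_pid]
    conv_rhs => rw [foldl_pcomp]
    rfl

lemma hull_pinv [Mul M] [IsLeftCancelMul M] {h : M → Option M} (hh : InInvHull h) :
    InInvHull (pinv h) := by
  obtain ⟨l, hl, rfl⟩ := hh
  refine ⟨l.reverse.map Prod.swap, by simp [hl], pinv_foldl l⟩

lemma constructible_inter [Mul M] [IsLeftCancelMul M] {X Y : Set M}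
    (hX : IsConstructible X) (hY : IsConstructible Y) : IsConstructible (X ∩ Y) := by
  obtain ⟨h, hh, rfl⟩ := hX
  obtain ⟨g, hg, rfl⟩ := hY
  refine ⟨pcomp g (pcomp (pinv h) h), hull_pcomp (hull_pcomp hh (hull_pinv hh)) hg, ?_⟩
  ext s
  simp only [Set.mem_inter_iff, pdom, Set.mem_setOf_eq]
  constructor
  · rintro ⟨hs, gs⟩
    obtain ⟨t, ht⟩ := Option.ne_none_iff_exists'.mp hs
    have h1 : pcomp (pinv h) h s = some s := by
      rw [pcomp_eq_some]
      exact ⟨t, ht, (pinv_eq_some (hull_pinj hh)).mpr ht⟩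
    show ((pcomp (pinv h) h s).bind g) ≠ none
    rw [h1]
    simpa using gs
  · intro hs
    have : pcomp g (pcomp (pinv h) h) s ≠ none := hs
    obtain ⟨t, ht⟩ := Option.ne_none_iff_exists'.mp this
    rw [pcomp_eq_some] at ht
    obtain ⟨u, hu, hu'⟩ := ht
    rw [pcomp_eq_some] at hu
    obtain ⟨v, hv, hv'⟩ := hu
    refine ⟨by simp [hv], ?_⟩
    have : u = s := by
      have := (pinv_eq_some (hull_pinj hh)).mp hv'
      exact hull_pinj hh this hv
    rw [this] at hu'
    simp [hu']

/-! ### Filter theory -/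

variable [Monoid M] [IsLeftCancelMul M]

/-- The intersection of two constructible ideals, as a `CIdeal`. -/
noncomputable def interIdeal (X Y : CIdeal M) : CIdeal M :=
  ⟨X.1 ∩ Y.1, constructible_inter X.2 Y.2⟩

lemma filter_inter_mem {F : Set (CIdeal M)} (hF : IsFilterOn F) {X Y : CIdeal M}
    (hX : X ∈ F) (hY : Y ∈ F) : interIdeal X Y ∈ F :=
  hF.2.2.1 X hX Y hY _ rfl

lemma filter_finset_subset {F : Set (CIdeal M)} (hF : IsFilterOn F)
    (T : Finset (CIdeal M)) (hT : ∀ W ∈ T, W ∈ F) :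
    ∃ Z ∈ F, ∀ W ∈ T, Z.1 ⊆ W.1 := by
  classical
  induction T using Finset.induction_on with
  | empty => obtain ⟨Z, hZ⟩ := hF.1; exact ⟨Z, hZ, by simp⟩
  | @insert a T ha ih =>
    obtain ⟨Z, hZ, hZsub⟩ := ih (fun W hW => hT W (Finset.mem_insert_of_mem hW))
    have haF : a ∈ F := hT a (Finset.mem_insert_self a T)
    refine ⟨interIdeal Z a, filter_inter_mem hF hZ haF, ?_⟩
    intro W hW
    rcases Finset.mem_insert.mp hW with h | h
    · subst h; exact Set.inter_subset_right
    · exact Set.Subset.trans Set.inter_subset_left (hZsub W h)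

lemma maximal_disjoint {χ : CharSpace M} (hχ : IsMaximalChar χ) {W : CIdeal M}
    (hW : χ W = false) : ∃ Z : CIdeal M, χ Z = true ∧ Z.1 ∩ W.1 = ∅ := by
  by_contra hcon
  push_neg at hcon
  set G : Set (CIdeal M) := {V | ∃ Z : CIdeal M, χ Z = true ∧ Z.1 ∩ W.1 ⊆ V.1} with hGdef
  have hF : IsFilterOn {X | χ X = true} := hχ.2.1
  have hFG : {X | χ X = true} ⊆ G := fun X hX => ⟨X, hX, Set.inter_subset_left⟩
  have hGfil : IsFilterOn G := by
    refine ⟨hF.1.imp (fun X hX => hFG hX), ?_, ?_, ?_⟩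
    · rintro V ⟨Z, hZ, hZV⟩
      have : (Z.1 ∩ W.1).Nonempty := hcon Z hZ
      exact this.mono hZV
    · rintro V₁ ⟨Z₁, hZ₁, hs₁⟩ V₂ ⟨Z₂, hZ₂, hs₂⟩ Z' hZ'
      refine ⟨interIdeal Z₁ Z₂, ?_, ?_⟩
      · exact filter_inter_mem hF hZ₁ hZ₂
      · rw [hZ']
        rintro x ⟨⟨hx1, hx2⟩, hxW⟩
        exact ⟨hs₁ ⟨hx1, hxW⟩, hs₂ ⟨hx2, hxW⟩⟩
    · rintro V ⟨Z, hZ, hZV⟩ Y hVY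
      exact ⟨Z, hZ, hZV.trans hVY⟩
  have hGeq := hχ.2.2 G hGfil hFG
  have hWG : W ∈ G := by
    obtain ⟨Z₀, hZ₀⟩ := hF.1
    exact ⟨Z₀, hZ₀, Set.inter_subset_right⟩
  rw [hGeq] at hWG
  rw [Set.mem_setOf_eq] at hWG
  exact absurd hWG (by simp [hW])

lemma exists_maximal_filter {F₀ : Set (CIdeal M)} (h : IsFilterOn F₀) :
    ∃ G, IsFilterOn G ∧ F₀ ⊆ G ∧ ∀ G', IsFilterOn G' → G ⊆ G' → G' = G := by
  obtain ⟨m, hm, hmax⟩ := zorn_subset_nonempty {F | IsFilterOn F}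
    (fun c hc hchain hcne => by
      obtain ⟨F₁, hF₁⟩ := hcne
      refine ⟨⋃₀ c, ⟨?_, ?_, ?_, ?_⟩, fun s hs => Set.subset_sUnion_of_mem hs⟩
      · obtain ⟨Z, hZ⟩ := (hc hF₁).1
        exact ⟨Z, Set.mem_sUnion.mpr ⟨F₁, hF₁, hZ⟩⟩
      · rintro X ⟨F, hFc, hXF⟩
        exact (hc hFc).2.1 X hXF
      · rintro X ⟨F, hFc, hXF⟩ Y ⟨F', hF'c, hYF'⟩ Z hZ
        rcases hchain.total hFc hF'c with hsub | hsub
        · exact ⟨F', hF'c, (hc hF'c).2.2.1 X (hsub hXF) Y hYF' Z hZ⟩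
        · exact ⟨F, hFc, (hc hFc).2.2.1 X hXF Y (hsub hYF') Z hZ⟩
      · rintro X ⟨F, hFc, hXF⟩ Y hXY
        exact ⟨F, hFc, (hc hFc).2.2.2 X hXF Y hXY⟩) F₀ h
  exact ⟨m, hmax.1, hm, fun G' hG' hsub => le_antisymm (hmax.2 hG' hsub) hsub⟩

lemma maxfilter_char {G : Set (CIdeal M)} (hG : IsFilterOn G)
    (hmax : ∀ G', IsFilterOn G' → G ⊆ G' → G' = G) :
    IsMaximalChar (fun X => decide (X ∈ G) : CharSpace M) := by
  have hset : {X : CIdeal M | decide (X ∈ G) = true} = G := by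
    ext X; simp
  refine ⟨⟨?_, ?_⟩, ?_, ?_⟩
  · obtain ⟨Z, hZ⟩ := hG.1
    exact ⟨Z, by simp [hZ]⟩
  · intro X Y Z hZ
    have : Z ∈ G ↔ X ∈ G ∧ Y ∈ G := by
      constructor
      · intro h
        exact ⟨hG.2.2.2 Z h X (hZ ▸ Set.inter_subset_left),
               hG.2.2.2 Z h Y (hZ ▸ Set.inter_subset_right)⟩
      · rintro ⟨hX, hY⟩
        exact hG.2.2.1 X hX Y hY Z hZ
    by_cases hX : X ∈ G <;> by_cases hY : Y ∈ G <;> simp [this, hX, hY]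
  · rw [hset]; exact hG
  · rw [hset]
    intro G' hG' hsub
    exact hmax G' hG' hsub

lemma omegaMax_subset_omega : OmegaMax M ⊆ Omega M := by
  intro χ hχ
  rw [Omega, mem_closure_iff]
  intro O hO hχO
  obtain ⟨I, u, hIu, hpi⟩ := isOpen_pi_iff.mp hO χ hχO
  have hF : IsFilterOn {X | χ X = true} := hχ.2.1
  -- positives
  obtain ⟨Z₁, hZ₁, hZ₁sub⟩ := filter_finset_subset hF
    (I.filter (fun X => χ X = true)) (fun W hW => (Finset.mem_filter.mp hW).2)
  -- negatives
  have hneg : ∀ T : Finset (CIdeal M), (∀ X ∈ T, χ X = false) →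
      ∃ Z, χ Z = true ∧ ∀ X ∈ T, Z.1 ∩ X.1 = ∅ := by
    intro T
    induction T using Finset.induction_on with
    | empty =>
      intro _
      obtain ⟨Z, hZ⟩ := hF.1
      exact ⟨Z, hZ, by simp⟩
    | @insert a T ha ih =>
      intro hT
      obtain ⟨Z, hZ, hZd⟩ := ih (fun X hX => hT X (Finset.mem_insert_of_mem hX))
      obtain ⟨Za, hZa, hZad⟩ := maximal_disjoint hχ (hT a (Finset.mem_insert_self a T))
      refine ⟨interIdeal Z Za, filter_inter_mem hF hZ hZa, ?_⟩
      intro X hX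
      rcases Finset.mem_insert.mp hX with h | h
      · subst h
        apply Set.eq_empty_of_subset_empty
        rw [← hZad]
        exact Set.inter_subset_inter_left _ Set.inter_subset_right
      · apply Set.eq_empty_of_subset_empty
        rw [← hZd X h]
        exact Set.inter_subset_inter_left _ Set.inter_subset_left
  obtain ⟨Z₂, hZ₂, hZ₂d⟩ := hneg (I.filter (fun X => χ X = false))
    (fun W hW => (Finset.mem_filter.mp hW).2)
  have hZ : interIdeal Z₁ Z₂ ∈ {X | χ X = true} := filter_inter_mem hF hZ₁ hZ₂
  obtain ⟨s, hs⟩ := hF.2.1 _ hZ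
  refine ⟨princhar s, hpi ?_, Set.mem_range_self s⟩
  intro X hX
  have hagree : princhar s X = χ X := by
    rcases Bool.eq_false_or_eq_true (χ X) with htrue | hfalse
    · have hsub := hZ₁sub X (Finset.mem_filter.mpr ⟨hX, htrue⟩)
      have : s ∈ X.1 := hsub hs.1
      simp [princhar, this, htrue]
    · have hd := hZ₂d X (Finset.mem_filter.mpr ⟨hX, hfalse⟩)
      have : s ∉ X.1 := fun hsX =>
        Set.eq_empty_iff_forall_notMem.mp hd s ⟨hs.2, hsX⟩
      simp [princhar, this, hfalse]
  rw [hagree]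
  exact (hIu X hX).2

lemma filter_fin_subset {F : Set (CIdeal M)} (hF : IsFilterOn F)
    (n : ℕ) (f : Fin n → CIdeal M) (hf : ∀ k, f k ∈ F) :
    ∃ Z ∈ F, ∀ k, Z.1 ⊆ (f k).1 := by
  induction n with
  | zero => obtain ⟨Z, hZ⟩ := hF.1; exact ⟨Z, hZ, fun k => k.elim0⟩
  | succ n ih =>
    obtain ⟨Z, hZ, hZsub⟩ := ih (fun k => f k.succ) (fun k => hf k.succ)
    refine ⟨interIdeal Z (f 0), filter_inter_mem hF hZ (hf 0), ?_⟩
    intro k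
    refine Fin.cases ?_ ?_ k
    · exact Set.inter_subset_right
    · intro j
      exact Set.Subset.trans Set.inter_subset_left (hZsub j)


/-- Let `X = X₀ ∖ ⋃ⱼ Xj j` and `Xi i = Xi0 i ∖ ⋃ⱼ Xij i j` be sets in
`J̄(S)` (all ingredients constructible right ideals) with `Xi i ⊆ X` for all `i`
(`m ≥ 1`).  With `η(X) = 1` interpreted through the given representations, the set
`U = {η ∈ Ω(S) : η(X) = 1, η(Xᵢ) = 0 for all i}` is disjoint from `∂Ω(S)` if and only
if `{X₁, …, Xₘ}` is a foundation set for `X`. -/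
theorem cstar_stmt2 {M : Type*} [Monoid M] [IsLeftCancelMul M]
    (m : ℕ) (hm : 1 ≤ m)
    (m₀ : ℕ) (X₀ : CIdeal M) (Xj : Fin m₀ → CIdeal M)
    (mi : Fin m → ℕ) (Xi0 : Fin m → CIdeal M)
    (Xij : (i : Fin m) → Fin (mi i) → CIdeal M)
    (X : Set M) (hXdef : X = X₀.1 \ ⋃ j, (Xj j).1)
    (XI : Fin m → Set M) (hXIdef : ∀ i, XI i = (Xi0 i).1 \ ⋃ j, (Xij i j).1)
    (hsub : ∀ i, XI i ⊆ X) :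
    Disjoint
      {η | η ∈ Omega M ∧
        (η X₀ = true ∧ ∀ j, η (Xj j) = false) ∧
        ∀ i, ¬ (η (Xi0 i) = true ∧ ∀ j, η (Xij i j) = false)}
      (BoundaryOmega M)
    ↔ IsFoundation X XI := by
  constructor
  · -- Disjoint → Foundation
    intro hdisj
    refine ⟨hsub, ?_⟩
    intro Y hYc hYne hYX
    by_contra hcon
    push_neg at hcon
    have hYdisj : ∀ i, Y ∩ XI i = ∅ := hcon
    -- the filter of supersets of Y
    set YI : CIdeal M := ⟨Y, hYc⟩ with hYI
    set F₀ : Set (CIdeal M) := {Z | Y ⊆ Z.1} with hF₀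
    have hF₀fil : IsFilterOn F₀ := by
      refine ⟨⟨YI, (subset_rfl : Y ⊆ YI.1)⟩, ?_, ?_, ?_⟩
      · exact fun Z hZ => hYne.mono hZ
      · intro A hA B hB Z hZ
        rw [Set.mem_setOf_eq, hZ]
        exact Set.subset_inter hA hB
      · intro A hA Z hAZ
        exact Set.Subset.trans hA hAZ
    obtain ⟨G, hGfil, hF₀G, hGmax⟩ := exists_maximal_filter hF₀fil
    set χ : CharSpace M := fun K => decide (K ∈ G) with hχdef
    have hχmax : IsMaximalChar χ := maxfilter_char hGfil hGmax
    have hχmem : χ ∈ OmegaMax M := hχmax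
    -- χ lies in U
    have hYG : YI ∈ G := hF₀G (subset_rfl : Y ⊆ YI.1)
    have hU : χ ∈ {η | η ∈ Omega M ∧
        (η X₀ = true ∧ ∀ j, η (Xj j) = false) ∧
        ∀ i, ¬ (η (Xi0 i) = true ∧ ∀ j, η (Xij i j) = false)} := by
      refine ⟨omegaMax_subset_omega hχmem, ⟨?_, ?_⟩, ?_⟩
      · have : X₀ ∈ G := hF₀G (hYX.trans (hXdef ▸ Set.diff_subset))
        simp [hχdef, this]
      · intro j
        simp only [hχdef, decide_eq_false_iff_not]
        intro hj
        have hZ : interIdeal YI (Xj j) ∈ G := filter_inter_mem hGfil hYG hj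
        have hne := hGfil.2.1 _ hZ
        obtain ⟨x, hx1, hx2⟩ := hne
        have : x ∈ X := hYX hx1
        rw [hXdef] at this
        exact this.2 (Set.mem_iUnion.mpr ⟨j, hx2⟩)
      · rintro i ⟨hi0, hij⟩
        simp only [hχdef, decide_eq_true_eq] at hi0
        have hWs : ∀ j : Fin (mi i), ∃ W : CIdeal M, χ W = true ∧ W.1 ∩ (Xij i j).1 = ∅ :=
          fun j => maximal_disjoint hχmax (hij j)
        choose Wf hWf1 hWf2 using hWs
        have hWfG : ∀ j, Wf j ∈ G := by
          intro j
          have := hWf1 j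
          simpa [hχdef] using this
        obtain ⟨Z, hZG, hZsub⟩ := filter_fin_subset hGfil (mi i) Wf hWfG
        have hZ' : interIdeal (interIdeal YI (Xi0 i)) Z ∈ G :=
          filter_inter_mem hGfil (filter_inter_mem hGfil hYG hi0) hZG
        obtain ⟨x, hx⟩ := hGfil.2.1 _ hZ'
        obtain ⟨⟨hxY, hxXi0⟩, hxZ⟩ := hx
        -- x ∈ Y ∩ Xi0 i, and Y ∩ XI i = ∅, so x ∈ ⋃ j Xij i j
        have hxU : x ∈ ⋃ j, (Xij i j).1 := by
          by_contra hxU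
          have : x ∈ XI i := by rw [hXIdef]; exact ⟨hxXi0, hxU⟩
          exact Set.eq_empty_iff_forall_notMem.mp (hYdisj i) x ⟨hxY, this⟩
        obtain ⟨j, hj⟩ := Set.mem_iUnion.mp hxU
        exact Set.eq_empty_iff_forall_notMem.mp (hWf2 j) x ⟨hZsub j hxZ, hj⟩
    exact Set.disjoint_left.mp hdisj hU (subset_closure hχmem)
  · -- Foundation → Disjoint
    intro hfound
    rw [Set.disjoint_left]
    rintro η ⟨hηΩ, hηcond⟩ hηB
    -- the condition set is open
    set C : Set (CharSpace M) := {η | (η X₀ = true ∧ ∀ j, η (Xj j) = false) ∧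
        ∀ i, ¬ (η (Xi0 i) = true ∧ ∀ j, η (Xij i j) = false)} with hCdef
    have hev : ∀ (K : CIdeal M) (b : Bool), IsOpen {η : CharSpace M | η K = b} := by
      intro K b
      have h1 : IsOpen ((fun η : CharSpace M => η K) ⁻¹' ({b} : Set Bool)) :=
        (continuous_apply K).isOpen_preimage _ (isOpen_discrete _)
      exact h1
    have hCopen : IsOpen C := by
      have : C = ({η : CharSpace M | η X₀ = true} ∩ ⋂ j, {η | η (Xj j) = false}) ∩
          ⋂ i, ({η : CharSpace M | η (Xi0 i) = false} ∪ ⋃ j, {η | η (Xij i j) = true}) := by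
        ext η
        simp only [hCdef, Set.mem_setOf_eq, Set.mem_inter_iff, Set.mem_iInter,
          Set.mem_union, Set.mem_iUnion]
        constructor
        · rintro ⟨⟨h1, h2⟩, h3⟩
          refine ⟨⟨h1, h2⟩, ?_⟩
          intro i
          by_cases hi : η (Xi0 i) = true
          · right
            by_contra hj
            push_neg at hj
            refine h3 i ⟨hi, fun j => ?_⟩
            cases hb : η (Xij i j) with
            | false => rfl
            | true => exact absurd hb (hj j)
          · left
            cases hb : η (Xi0 i) with
            | false => rfl
            | true => exact absurd hb hi
        · rintro ⟨⟨h1, h2⟩, h3⟩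
          refine ⟨⟨h1, h2⟩, ?_⟩
          rintro i ⟨hi, hj⟩
          rcases h3 i with h | ⟨j, h⟩
          · rw [hi] at h; exact Bool.noConfusion h
          · rw [hj j] at h; exact Bool.noConfusion h
      rw [this]
      refine IsOpen.inter (IsOpen.inter (hev _ _) (isOpen_iInter_of_finite fun j => hev _ _)) ?_
      exact isOpen_iInter_of_finite fun i =>
        (hev _ _).union (isOpen_iUnion fun j => hev _ _)
    have hηC : η ∈ C := hηcond
    obtain ⟨χ, hχC, hχmax⟩ := mem_closure_iff.mp hηB C hCopen hηC
    -- now derive contradiction from foundation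
    obtain ⟨⟨hχX₀, hχXj⟩, hχi⟩ := hχC
    have hF : IsFilterOn {K : CIdeal M | χ K = true} := hχmax.2.1
    have hZs : ∀ j : Fin m₀, ∃ Z : CIdeal M, χ Z = true ∧ Z.1 ∩ (Xj j).1 = ∅ :=
      fun j => maximal_disjoint hχmax (hχXj j)
    choose Zf hZf1 hZf2 using hZs
    have hWs : ∀ i : Fin m, ∃ W : CIdeal M, χ W = true ∧ W.1 ∩ XI i = ∅ := by
      intro i
      rcases Bool.eq_false_or_eq_true (χ (Xi0 i)) with htrue | hfalse
      · -- χ (Xi0 i) = true : some Xij must be true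
        have : ¬ ∀ j, χ (Xij i j) = false := fun hall => hχi i ⟨htrue, hall⟩
        push_neg at this
        obtain ⟨j, hj⟩ := this
        have hjt : χ (Xij i j) = true := by
          cases hb : χ (Xij i j) with
          | false => exact absurd hb hj
          | true => rfl
        refine ⟨Xij i j, hjt, ?_⟩
        apply Set.eq_empty_iff_forall_notMem.mpr
        rintro x ⟨hx1, hx2⟩
        rw [hXIdef i] at hx2
        exact hx2.2 (Set.mem_iUnion.mpr ⟨j, hx1⟩)
      · obtain ⟨W, hW1, hW2⟩ := maximal_disjoint hχmax hfalse
        refine ⟨W, hW1, ?_⟩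
        apply Set.eq_empty_of_subset_empty
        rw [← hW2]
        refine Set.inter_subset_inter_right _ ?_
        rw [hXIdef i]
        exact Set.diff_subset
    choose Wf hWf1 hWf2 using hWs
    obtain ⟨Za, hZa, hZasub⟩ := filter_fin_subset hF m₀ Zf hZf1
    obtain ⟨Zb, hZb, hZbsub⟩ := filter_fin_subset hF m Wf hWf1
    have hZ : interIdeal (interIdeal X₀ Za) Zb ∈ {K : CIdeal M | χ K = true} :=
      filter_inter_mem hF (filter_inter_mem hF hχX₀ hZa) hZb
    obtain ⟨x₀, hx₀⟩ := hF.2.1 _ hZ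
    set Z := interIdeal (interIdeal X₀ Za) Zb with hZdef
    have hZX : Z.1 ⊆ X := by
      rw [hXdef]
      rintro x ⟨⟨hxX₀, hxZa⟩, hxZb⟩
      refine ⟨hxX₀, ?_⟩
      intro hxu
      obtain ⟨j, hj⟩ := Set.mem_iUnion.mp hxu
      exact Set.eq_empty_iff_forall_notMem.mp (hZf2 j) x ⟨hZasub j hxZa, hj⟩
    obtain ⟨i, y, hy1, hy2⟩ := hfound.2 Z.1 Z.2 ⟨x₀, hx₀⟩ hZX
    have : y ∈ (Wf i).1 := hZbsub i hy1.2
    exact Set.eq_empty_iff_forall_notMem.mp (hWf2 i) y ⟨this, hy2⟩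

end SgC
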